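/- Fix ω > 0 and φ > 0. As ν → ∞, the mode of the GIG(ω,φ,ν) distribution is asymptotically equal to its mean: lim_{ν→∞} [√(φ/ω) · K_{ν+2}(2√(ωφ))/K_{ν+1}(2√(ωφ))] · 2ω/(ν + √(ν² + 4ωφ)) = 1. -/

import Mathlib

open MeasureTheory ProbabilityTheory Filter

/-- Modified Bessel function of the third kind:
`K_ν(z) = (1/2) ∫₀^∞ u^(ν-1) exp(-z(u+1/u)/2) du`. -/
noncomputable def besselK (ν z : ℝ) : ℝ :=
  (1 / 2) * ∫ u in Set.Ioi (0 : ℝ), u ^ (ν - 1) * Real.exp (-(z * (u + 1 / u)) / 2)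

/-- The ratio `R_ν(z) = K_{ν+1}(z) / K_ν(z)`. -/
noncomputable def besselR (ν z : ℝ) : ℝ := besselK (ν + 1) z / besselK ν z

section AuxLemmas

open Set Real Nat

lemma pow_mul_exp_neg_le {x : ℝ} (hx : 0 ≤ x) (n : ℕ) : x ^ n * Real.exp (-x) ≤ n ! := by
  have h := Real.pow_div_factorial_le_exp (x := x) hx n
  rw [div_le_iff₀ (by positivity : (0:ℝ) < (n ! : ℝ))] at h
  have he : (0:ℝ) < Real.exp x := Real.exp_pos x
  rw [Real.exp_neg, mul_inv_le_iff₀ he]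
  linarith [h]

lemma gig_bound {z : ℝ} (hz : 0 < z) (ν : ℝ) : ∃ C : ℝ, 0 ≤ C ∧ ∀ u : ℝ, u ∈ Set.Ioi (0:ℝ) →
    u ^ ν * Real.exp (-(z * (u + 1 / u)) / 2) ≤ C * Real.exp (-(z/4) * u) := by
  set n : ℕ := ⌈-ν⌉₊ with hn
  set m : ℕ := ⌈ν⌉₊ with hm
  refine ⟨max ((n ! : ℝ) * (2/z)^n) ((m ! : ℝ) * (4/z)^m), le_max_iff.2 (Or.inl (by positivity)), ?_⟩
  intro u hu
  have hu0 : (0:ℝ) < u := hu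
  have key : u ^ ν * Real.exp (-(z * (u + 1 / u)) / 2)
      = (u ^ ν * Real.exp (-(z/(2*u))) * Real.exp (-((z/4)*u))) * Real.exp (-((z/4) * u)) := by
    rw [mul_assoc, mul_assoc, ← Real.exp_add, ← Real.exp_add]
    congr 2
    field_simp
    ring
  rw [key, neg_mul]
  apply mul_le_mul_of_nonneg_right _ (Real.exp_pos _).le
  rcases le_total u 1 with h1 | h1
  · refine le_trans ?_ (le_max_left _ _)
    have e0 : Real.exp (-((z/4)*u)) ≤ 1 := Real.exp_le_one_iff.2 (by nlinarith)
    have e1 : u ^ ν ≤ u ^ (-(n:ℝ)) :=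
      Real.rpow_le_rpow_of_exponent_ge hu0 h1 (by
        have := Nat.le_ceil (-ν); simp only [← hn] at this; linarith)
    have e2 : u ^ (-(n:ℝ)) = (2/z)^n * (z/(2*u))^n := by
      rw [Real.rpow_neg hu0.le, Real.rpow_natCast, ← inv_pow, ← mul_pow]
      congr 1
      field_simp
    have e3 : (z/(2*u))^n * Real.exp (-(z/(2*u))) ≤ (n ! : ℝ) :=
      pow_mul_exp_neg_le (by positivity) n
    calc u ^ ν * Real.exp (-(z/(2*u))) * Real.exp (-((z/4)*u))
        ≤ u ^ ν * Real.exp (-(z/(2*u))) * 1 := by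
          apply mul_le_mul_of_nonneg_left e0 (by positivity)
      _ = u ^ ν * Real.exp (-(z/(2*u))) := mul_one _
      _ ≤ u ^ (-(n:ℝ)) * Real.exp (-(z/(2*u))) :=
          mul_le_mul_of_nonneg_right e1 (Real.exp_pos _).le
      _ = (2/z)^n * ((z/(2*u))^n * Real.exp (-(z/(2*u)))) := by rw [e2]; ring
      _ ≤ (2/z)^n * (n ! : ℝ) := mul_le_mul_of_nonneg_left e3 (by positivity)
      _ = (n ! : ℝ) * (2/z)^n := mul_comm _ _
  · refine le_trans ?_ (le_max_right _ _)
    have e0 : Real.exp (-(z/(2*u))) ≤ 1 := Real.exp_le_one_iff.2 (by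
      have : 0 < z/(2*u) := by positivity
      linarith)
    have e1 : u ^ ν ≤ u ^ (m:ℝ) :=
      Real.rpow_le_rpow_of_exponent_le h1 (by
        have := Nat.le_ceil ν; simp only [← hm] at this; linarith)
    have e2 : u ^ (m:ℝ) = (4/z)^m * ((z/4)*u)^m := by
      rw [Real.rpow_natCast, ← mul_pow]
      congr 1
      field_simp
    have e3 : ((z/4)*u)^m * Real.exp (-((z/4)*u)) ≤ (m ! : ℝ) :=
      pow_mul_exp_neg_le (by positivity) m
    calc u ^ ν * Real.exp (-(z/(2*u))) * Real.exp (-((z/4)*u))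
        ≤ u ^ (m:ℝ) * Real.exp (-(z/(2*u))) * Real.exp (-((z/4)*u)) := by
          apply mul_le_mul_of_nonneg_right
            (mul_le_mul_of_nonneg_right e1 (Real.exp_pos _).le) (Real.exp_pos _).le
      _ ≤ u ^ (m:ℝ) * 1 * Real.exp (-((z/4)*u)) := by
          apply mul_le_mul_of_nonneg_right
            (mul_le_mul_of_nonneg_left e0 (by positivity)) (Real.exp_pos _).le
      _ = (4/z)^m * (((z/4)*u)^m * Real.exp (-((z/4)*u))) := by rw [mul_one, e2]; ring
      _ ≤ (4/z)^m * (m ! : ℝ) := mul_le_mul_of_nonneg_left e3 (by positivity)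
      _ = (m ! : ℝ) * (4/z)^m := mul_comm _ _

lemma gig_continuousOn (z ν : ℝ) :
    ContinuousOn (fun u : ℝ => u ^ ν * Real.exp (-(z * (u + 1 / u)) / 2)) (Set.Ioi 0) := by
  apply ContinuousOn.mul
  · intro u hu
    exact (Real.continuousAt_rpow_const u ν (Or.inl (ne_of_gt hu))).continuousWithinAt
  · apply Real.continuous_exp.comp_continuousOn
    apply ContinuousOn.div_const
    apply ContinuousOn.neg
    apply continuousOn_const.mul
    exact continuousOn_id.add (continuousOn_const.div continuousOn_id
      (fun u hu => ne_of_gt (mem_Ioi.mp hu)))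

lemma gig_integrable {z : ℝ} (hz : 0 < z) (ν : ℝ) :
    IntegrableOn (fun u : ℝ => u ^ ν * Real.exp (-(z * (u + 1 / u)) / 2)) (Set.Ioi 0) := by
  obtain ⟨C, hC0, hC⟩ := gig_bound hz ν
  have hmaj : IntegrableOn (fun u : ℝ => C * Real.exp (-(z/4) * u)) (Set.Ioi 0) :=
    (exp_neg_integrableOn_Ioi 0 (by positivity)).const_mul C
  refine Integrable.mono hmaj
    ((gig_continuousOn z ν).aestronglyMeasurable measurableSet_Ioi) ?_
  filter_upwards [ae_restrict_mem measurableSet_Ioi] with u hu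
  have hu0 : (0:ℝ) < u := hu
  rw [Real.norm_eq_abs, Real.norm_eq_abs, abs_of_nonneg (by positivity),
    abs_of_nonneg (by positivity)]
  exact hC u hu

lemma gig_integral_eq (z ν : ℝ) :
    ∫ u in Set.Ioi (0:ℝ), u ^ ν * Real.exp (-(z * (u + 1 / u)) / 2) = 2 * besselK (ν+1) z := by
  simp only [besselK, add_sub_cancel_right]
  ring

lemma besselK_pos {z : ℝ} (hz : 0 < z) (ν : ℝ) : 0 < besselK ν z := by
  rw [besselK]
  have h := gig_integrable hz (ν - 1)
  apply mul_pos (by norm_num)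
  rw [setIntegral_pos_iff_support_of_nonneg_ae _ h]
  · have hsub : Set.Ioi (0:ℝ) ⊆
        (Function.support fun u : ℝ => u ^ (ν-1) * Real.exp (-(z * (u + 1 / u)) / 2))
          ∩ Set.Ioi 0 := by
      intro u hu
      have hu0 : (0:ℝ) < u := hu
      have hpos : 0 < u ^ (ν-1) * Real.exp (-(z * (u + 1 / u)) / 2) := by positivity
      exact ⟨Function.mem_support.2 (ne_of_gt hpos), hu⟩
    refine lt_of_lt_of_le ?_ (measure_mono hsub)
    simp [Real.volume_Ioi]
  · filter_upwards [ae_restrict_mem measurableSet_Ioi] with u hu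
    have hu0 : (0:ℝ) < u := hu
    positivity

lemma besselK_rec {z : ℝ} (hz : 0 < z) {ν : ℝ} (hν : 0 < ν) :
    z * besselK (ν+1) z = 2 * ν * besselK ν z + z * besselK (ν-1) z := by
  set E : ℝ → ℝ := fun u => Real.exp (-(z * (u + 1 / u)) / 2) with hE
  set f : ℝ → ℝ := fun u => u ^ ν * E u with hf
  set f' : ℝ → ℝ := fun u =>
    ν * (u ^ (ν-1) * E u) - z/2 * (u ^ ν * E u) + z/2 * (u ^ (ν-2) * E u) with hf'
  have hf0 : f 0 = 0 := by
    simp [hf, Real.zero_rpow hν.ne']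
  have hcont : ContinuousWithinAt f (Set.Ici 0) 0 := by
    rw [ContinuousWithinAt, hf0]
    apply squeeze_zero' (g := fun u : ℝ => u ^ ν)
    · filter_upwards [self_mem_nhdsWithin] with u hu
      have hu0 : (0:ℝ) ≤ u := hu
      have : (0:ℝ) ≤ u ^ ν := Real.rpow_nonneg hu0 ν
      have : (0:ℝ) < E u := Real.exp_pos _
      positivity
    · filter_upwards [self_mem_nhdsWithin] with u hu
      have hu0 : (0:ℝ) ≤ u := hu
      apply mul_le_of_le_one_right (Real.rpow_nonneg hu0 ν)
      rw [hE, Real.exp_le_one_iff]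
      have h1 : (0:ℝ) ≤ 1 / u := by positivity
      have h2 : (0:ℝ) ≤ z * (u + 1/u) := by positivity
      linarith
    · have := (Real.continuousAt_rpow_const 0 ν (Or.inr hν.le)).continuousWithinAt
        (s := Set.Ici (0:ℝ))
      rwa [ContinuousWithinAt, Real.zero_rpow hν.ne'] at this
  have htop : Tendsto f atTop (nhds 0) := by
    apply squeeze_zero' (g := fun u : ℝ => u ^ ν * Real.exp (-(z/2) * u))
    · filter_upwards [Ioi_mem_atTop (0:ℝ)] with u hu
      have hu0 : (0:ℝ) < u := hu
      have : (0:ℝ) < E u := Real.exp_pos _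
      positivity
    · filter_upwards [Ioi_mem_atTop (0:ℝ)] with u hu
      have hu0 : (0:ℝ) < u := hu
      apply mul_le_mul_of_nonneg_left _ (Real.rpow_nonneg hu0.le ν)
      rw [hE, Real.exp_le_exp]
      have h1 : (0:ℝ) ≤ 1 / u := by positivity
      nlinarith
    · exact tendsto_rpow_mul_exp_neg_mul_atTop_nhds_zero ν (z/2) (by positivity)
  have hderiv : ∀ u ∈ Set.Ioi (0:ℝ), HasDerivAt f (f' u) u := by
    intro u hu
    have hu0 : (0:ℝ) < u := hu
    have h0 : HasDerivAt (fun u : ℝ => u + 1/u) (1 + -(u^2)⁻¹) u := by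
      simpa [one_div, Pi.add_def] using (hasDerivAt_id' u).add (hasDerivAt_inv hu0.ne')
    have h1 : HasDerivAt (fun u : ℝ => -(z * (u + 1/u))/2) (-(z * (1 + -(u^2)⁻¹))/2) u :=
      ((h0.const_mul z).neg).div_const 2
    have hEd : HasDerivAt E (E u * (-(z * (1 + -(u^2)⁻¹))/2)) u := h1.exp
    have hP : HasDerivAt (fun u : ℝ => u ^ ν) (ν * u ^ (ν-1)) u :=
      Real.hasDerivAt_rpow_const (Or.inl hu0.ne')
    have := hP.mul hEd
    have hpow : u ^ (ν - 2) = u ^ ν * (u^2)⁻¹ := by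
      rw [show ν - 2 = ν + (-2) by ring, Real.rpow_add hu0, Real.rpow_neg hu0.le,
        show ((2:ℝ)) = ((2:ℕ):ℝ) by norm_num, Real.rpow_natCast]
    have h2 : f' u = ν * u ^ (ν-1) * E u + u ^ ν * (E u * (-(z * (1 + -(u^2)⁻¹))/2)) := by
      simp only [hf']
      rw [hpow]
      ring
    rw [h2]
    exact this
  have hint : IntegrableOn f' (Set.Ioi 0) := by
    rw [hf']
    exact (((gig_integrable hz (ν-1)).const_mul ν).sub
      ((gig_integrable hz ν).const_mul (z/2))).add ((gig_integrable hz (ν-2)).const_mul (z/2))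
  have hFTC : ∫ u in Set.Ioi (0:ℝ), f' u = 0 - f 0 :=
    integral_Ioi_of_hasDerivAt_of_tendsto hcont hderiv hint htop
  rw [hf0, sub_zero] at hFTC
  have i1 : IntegrableOn (fun u : ℝ => ν * (u ^ (ν-1) * E u)) (Set.Ioi 0) :=
    (gig_integrable hz (ν-1)).const_mul ν
  have i2 : IntegrableOn (fun u : ℝ => z/2 * (u ^ ν * E u)) (Set.Ioi 0) :=
    (gig_integrable hz ν).const_mul (z/2)
  have i3 : IntegrableOn (fun u : ℝ => z/2 * (u ^ (ν-2) * E u)) (Set.Ioi 0) :=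
    (gig_integrable hz (ν-2)).const_mul (z/2)
  have i12 : IntegrableOn
      (fun u : ℝ => ν * (u ^ (ν-1) * E u) - z/2 * (u ^ ν * E u)) (Set.Ioi 0) := i1.sub i2
  have hsplit : ∫ u in Set.Ioi (0:ℝ), f' u
      = ν * (2 * besselK ν z) - z/2 * (2 * besselK (ν+1) z) + z/2 * (2 * besselK (ν-1) z) := by
    simp only [hf']
    rw [integral_add i12 i3, integral_sub i1 i2, integral_const_mul, integral_const_mul,
      integral_const_mul]
    simp only [hE]
    rw [gig_integral_eq, gig_integral_eq, gig_integral_eq,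
      show ν - 1 + 1 = ν by ring, show ν - 2 + 1 = ν - 1 by ring]
  rw [hsplit] at hFTC
  linarith

lemma aux_tendsto (c b : ℝ) (hc : 0 ≤ c) :
    Tendsto (fun ν : ℝ => (2*(ν+1) + b/(2*ν)) / (ν + Real.sqrt (ν^2 + c))) atTop (nhds 1) := by
  have hpow : Tendsto (fun ν : ℝ => ν^2) atTop atTop := tendsto_pow_atTop two_ne_zero
  have h1 : Tendsto (fun ν : ℝ => 2 + 2/ν + b/(2*ν^2)) atTop (nhds 2) := by
    have t1 : Tendsto (fun ν : ℝ => 2/ν) atTop (nhds 0) :=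
      tendsto_const_nhds.div_atTop tendsto_id
    have t2 : Tendsto (fun ν : ℝ => b/(2*ν^2)) atTop (nhds 0) :=
      Tendsto.div_atTop (tendsto_const_nhds (x := b)) (hpow.const_mul_atTop two_pos)
    have h := (tendsto_const_nhds (x := (2:ℝ)) (f := atTop)).add t1 |>.add t2
    norm_num at h
    exact h
  have h2 : Tendsto (fun ν : ℝ => 1 + Real.sqrt (1 + c/ν^2)) atTop (nhds 2) := by
    have t3 : Tendsto (fun ν : ℝ => 1 + c/ν^2) atTop (nhds 1) := by
      have h := (tendsto_const_nhds (x := (1:ℝ)) (f := atTop)).add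
        (Tendsto.div_atTop (tendsto_const_nhds (x := c)) hpow)
      norm_num at h
      exact h
    have t4 := (Real.continuous_sqrt.tendsto 1).comp t3
    have h := (tendsto_const_nhds (x := (1:ℝ)) (f := atTop)).add t4
    norm_num [Function.comp] at h
    exact h
  have h3 := h1.div h2 (by norm_num)
  rw [show (2:ℝ)/2 = 1 by norm_num] at h3
  apply Tendsto.congr' _ h3
  filter_upwards [eventually_gt_atTop (0:ℝ)] with ν hν
  have hs : Real.sqrt (1 + c/ν^2) = Real.sqrt (ν^2 + c) / ν := by
    rw [show 1 + c/ν^2 = (ν^2+c)/ν^2 by field_simp,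
      Real.sqrt_div (add_nonneg (sq_nonneg ν) hc) _, Real.sqrt_sq hν.le]
  have hsn : (0:ℝ) ≤ Real.sqrt (ν^2+c) := Real.sqrt_nonneg _
  have hD : (0:ℝ) < ν + Real.sqrt (ν^2+c) := by linarith
  simp only [Pi.div_apply]
  rw [hs]
  rw [div_eq_div_iff (by positivity : (0:ℝ) < 1 + Real.sqrt (ν^2+c) / ν).ne' hD.ne']
  field_simp

end AuxLemmas

section MainProof

open Set Real

/-- **mode ∼ mean for the GIG as ν → ∞.**
For fixed `ω, φ > 0`, the mean `√(φ/ω) K_{ν+2}(2√(ωφ))/K_{ν+1}(2√(ωφ))` of GIG(ω,φ,ν)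
is asymptotically equal to its mode `(ν + √(ν² + 4ωφ))/(2ω)` as `ν → ∞`. -/
theorem GIG_mode_asymptotically_mean (ω φ : ℝ) (hω : 0 < ω) (hφ : 0 < φ) :
    Tendsto (fun ν : ℝ =>
        (Real.sqrt (φ / ω) *
            (besselK (ν + 2) (2 * Real.sqrt (ω * φ)) /
              besselK (ν + 1) (2 * Real.sqrt (ω * φ)))) *
          (2 * ω / (ν + Real.sqrt (ν ^ 2 + 4 * ω * φ))))
      atTop (nhds 1) := by
  have hωφ : 0 < ω * φ := mul_pos hω hφ
  set z : ℝ := 2 * Real.sqrt (ω * φ) with hzdef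
  have hz : 0 < z := by
    rw [hzdef]
    exact mul_pos two_pos (Real.sqrt_pos.2 hωφ)
  have hz2 : z^2 = 4 * (ω * φ) := by
    rw [hzdef, mul_pow, Real.sq_sqrt hωφ.le]
    ring
  have hcoef : Real.sqrt (φ / ω) * (2 * ω) = z := by
    rw [hzdef, Real.sqrt_div hφ.le,
      show Real.sqrt φ / Real.sqrt ω * (2 * ω) = 2 * (Real.sqrt φ * (ω / Real.sqrt ω)) by ring,
      Real.div_sqrt, ← Real.sqrt_mul hφ.le, mul_comm φ ω]
  have hc : (0:ℝ) ≤ 4 * ω * φ := by positivity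
  apply tendsto_of_tendsto_of_tendsto_of_le_of_le'
    (aux_tendsto (4*ω*φ) 0 hc) (aux_tendsto (4*ω*φ) (z^2) hc)
  · -- lower bound
    filter_upwards [eventually_ge_atTop (1:ℝ)] with ν hν
    have hν0 : (0:ℝ) < ν := by linarith
    have hK1 : 0 < besselK (ν+1) z := besselK_pos hz _
    have hK2 : 0 < besselK (ν+2) z := besselK_pos hz _
    have hK : 0 < besselK ν z := besselK_pos hz _
    have hD : (0:ℝ) < ν + Real.sqrt (ν^2 + 4*ω*φ) := by positivity
    have rec1 := besselK_rec hz (show (0:ℝ) < ν+1 by linarith)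
    rw [show ν+1+1 = ν+2 by ring, show ν+1-1 = ν by ring] at rec1
    have e1 : z * (besselK (ν+2) z / besselK (ν+1) z)
        = 2*(ν+1) + z * (besselK ν z / besselK (ν+1) z) := by
      field_simp
      linarith [rec1]
    have hTeq : (Real.sqrt (φ/ω) * (besselK (ν+2) z / besselK (ν+1) z))
          * (2*ω / (ν + Real.sqrt (ν^2 + 4*ω*φ)))
        = (2*(ν+1) + z * (besselK ν z / besselK (ν+1) z)) / (ν + Real.sqrt (ν^2 + 4*ω*φ)) := by
      rw [← e1, ← hcoef]
      ring
    rw [hTeq, zero_div, add_zero]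
    have hr : 0 ≤ z * (besselK ν z / besselK (ν+1) z) := by positivity
    rw [div_le_div_iff₀ hD hD]
    nlinarith
  · -- upper bound
    filter_upwards [eventually_ge_atTop (1:ℝ)] with ν hν
    have hν0 : (0:ℝ) < ν := by linarith
    have hK1 : 0 < besselK (ν+1) z := besselK_pos hz _
    have hK2 : 0 < besselK (ν+2) z := besselK_pos hz _
    have hK : 0 < besselK ν z := besselK_pos hz _
    have hKm : 0 < besselK (ν-1) z := besselK_pos hz _
    have hD : (0:ℝ) < ν + Real.sqrt (ν^2 + 4*ω*φ) := by positivity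
    have rec1 := besselK_rec hz (show (0:ℝ) < ν+1 by linarith)
    rw [show ν+1+1 = ν+2 by ring, show ν+1-1 = ν by ring] at rec1
    have rec2 := besselK_rec hz hν0
    have e1 : z * (besselK (ν+2) z / besselK (ν+1) z)
        = 2*(ν+1) + z * (besselK ν z / besselK (ν+1) z) := by
      field_simp
      linarith [rec1]
    have hTeq : (Real.sqrt (φ/ω) * (besselK (ν+2) z / besselK (ν+1) z))
          * (2*ω / (ν + Real.sqrt (ν^2 + 4*ω*φ)))
        = (2*(ν+1) + z * (besselK ν z / besselK (ν+1) z)) / (ν + Real.sqrt (ν^2 + 4*ω*φ)) := by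
      rw [← e1, ← hcoef]
      ring
    rw [hTeq]
    have hr2 : z * (besselK ν z / besselK (ν+1) z) ≤ z^2 / (2*ν) := by
      rw [show z * (besselK ν z / besselK (ν+1) z) = (z * besselK ν z) / besselK (ν+1) z by ring,
        div_le_div_iff₀ hK1 (by positivity : (0:ℝ) < 2*ν)]
      have e : z^2 * besselK (ν+1) z = z * (2*ν*besselK ν z + z*besselK (ν-1) z) := by
        rw [← rec2]; ring
      have h9 : 0 ≤ z^2 * besselK (ν-1) z := by positivity
      nlinarith [e, h9]
    rw [div_le_div_iff₀ hD hD]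
    nlinarith

end MainProof
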